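/- Let V be a real vector space and g a symmetric bilinear form on V. Let R₀ : V → V be a g-symmetric linear map, Y : V → V a g-antisymmetric linear map, c ∈ V, and let P be a linear map assigning to each u ∈ V a linear map P(u) : V → V, such that: (i) P(u) is g-antisymmetric for every u ∈ V, and (ii) g(u, P(v)(w)) + g(v, P(w)(u)) + g(w, P(u)(v)) = 0 for all u, v, w ∈ V. Then the linear map K : V → V defined by K(v) = R₀(v) + (1/2)·P(c)(v) − P(v)(c) − (1/4)·Y(Y(v)) is g-symmetric: g(K(u), v) = g(u, K(v)) for all u, v ∈ V. -/
import Mathlib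


/-- **Lemma `lemmaoperators`(1) (linear-algebraic form).** Let `V` be a real vector space
and `g` a symmetric bilinear form on `V`. Let `R₀` be a `g`-symmetric endomorphism, `Y` a
`g`-antisymmetric endomorphism, `c ∈ V`, and `P` a linear map assigning to each `u ∈ V` a
`g`-antisymmetric endomorphism `P u`, satisfying the cyclic identity
`g(u, P v w) + g(v, P w u) + g(w, P u v) = 0`. Then the map
`K v = R₀ v + (1/2) • P c v − P v c − (1/4) • Y (Y v)` is `g`-symmetric. -/
theorem jacobiOperator_isSymm
    (V : Type*) [AddCommGroup V] [Module ℝ V]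
    (g : LinearMap.BilinForm ℝ V) (hg : ∀ u v : V, g u v = g v u)
    (R₀ : V →ₗ[ℝ] V) (hR₀ : ∀ u v : V, g (R₀ u) v = g u (R₀ v))
    (Y : V →ₗ[ℝ] V) (hY : ∀ u v : V, g (Y u) v = - g u (Y v))
    (c : V)
    (P : V →ₗ[ℝ] (V →ₗ[ℝ] V))
    (hPanti : ∀ u v w : V, g (P u v) w = - g v (P u w))
    (hPcyc : ∀ u v w : V, g u (P v w) + g v (P w u) + g w (P u v) = 0) :
    ∀ u v : V,
      g (R₀ u + (1/2 : ℝ) • P c u - P u c - (1/4 : ℝ) • Y (Y u)) v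
        = g u (R₀ v + (1/2 : ℝ) • P c v - P v c - (1/4 : ℝ) • Y (Y v)) := by
  intro u v
  have hYY : g (Y (Y u)) v = g u (Y (Y v)) := by
    rw [hY, hY u (Y v)]; ring
  have hPc : g (P c u) v = - g u (P c v) := by
    rw [hPanti c u v, hg u (P c v)]
  have hPuc : g (P u c) v = - g u (P c v) + g u (P v c) := by
    have h1 := hPcyc v c u
    have h2 : g (P u c) v = - g c (P u v) := hPanti u c v
    have h3 : g v (P c u) = - g u (P c v) := by
      rw [hg v (P c u), hPanti c u v, hg u (P c v)]
    have h4 : g u (P v c) = g (P v c) u := (hg _ _).symm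
    linarith [h1, h2, h3]
  simp only [map_add, map_sub, map_smul, LinearMap.add_apply, LinearMap.sub_apply,
    LinearMap.smul_apply, smul_eq_mul]
  rw [hR₀, hYY, hPc, hPuc]
  ring
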